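/- Let a ∈ (0,1) and set S = π/(4·√2·a). Let x : ℝ → ℝ be twice differentiable on [0, S] with x''(s) = −2·(1 + 4a² − x(s)²/(1 − a²))·x(s) for all s ∈ [0, S], x(0) = √(1 − a²), and x'(0) = 0. Then there exists s₀ ∈ (0, S] with x(s₀) = 0. -/

import Mathlib

set_option maxHeartbeats 1000000 in
/-- **The profile vanishes by time `π/(4√2·a)`.**
Let `a ∈ (0,1)` and `S = π/(4√2·a)`. If `x` solves
`x'' = −2(1 + 4a² − x²/(1 − a²))·x` on `[0, S]` with `x(0) = √(1 − a²)`, `x'(0) = 0`,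
then `x` has a zero in `(0, S]`. -/
theorem decoupled_ode_has_zero
    (a : ℝ) (ha : a ∈ Set.Ioo (0 : ℝ) 1)
    (S : ℝ) (hS : S = Real.pi / (4 * Real.sqrt 2 * a))
    (x x' x'' : ℝ → ℝ)
    (hx : ∀ s ∈ Set.Icc (0 : ℝ) S, HasDerivAt x (x' s) s)
    (hx' : ∀ s ∈ Set.Icc (0 : ℝ) S, HasDerivAt x' (x'' s) s)
    (hODE : ∀ s ∈ Set.Icc (0 : ℝ) S,
      x'' s = -2 * (1 + 4 * a ^ 2 - (x s) ^ 2 / (1 - a ^ 2)) * x s)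
    (hx0 : x 0 = Real.sqrt (1 - a ^ 2)) (hx'0 : x' 0 = 0) :
    ∃ s₀ ∈ Set.Ioc (0 : ℝ) S, x s₀ = 0 := by
  obtain ⟨ha0, ha1⟩ := ha
  have hc0 : (0:ℝ) < 1 - a ^ 2 := by nlinarith
  have hsqrt2 : (0:ℝ) < Real.sqrt 2 := Real.sqrt_pos.mpr (by norm_num)
  have hS0 : 0 < S := by
    rw [hS]; positivity
  have hx0sq : x 0 ^ 2 = 1 - a ^ 2 := by rw [hx0, Real.sq_sqrt hc0.le]
  have hx0pos : 0 < x 0 := by rw [hx0]; exact Real.sqrt_pos.mpr hc0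
  have hxc : ContinuousOn x (Set.Icc 0 S) :=
    fun s hs => (hx s hs).continuousAt.continuousWithinAt
  -- Energy function and its conservation (scaled by 2(1-a²) to avoid divisions)
  set E : ℝ → ℝ := fun s =>
    x' s ^ 2 * (1 - a ^ 2) + 2 * (1 + 4 * a ^ 2) * (1 - a ^ 2) * x s ^ 2 - x s ^ 4 with hE
  have hEd : ∀ s ∈ Set.Icc (0:ℝ) S, HasDerivAt E 0 s := by
    intro s hs
    have h1 := hx s hs
    have h2 := hx' s hs
    have hder : HasDerivAt E
        ((2 * x' s ^ 1 * x'' s) * (1 - a ^ 2)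
          + 2 * (1 + 4 * a ^ 2) * (1 - a ^ 2) * (2 * x s ^ 1 * x' s)
          - 4 * x s ^ 3 * x' s) s := by
      exact (((h2.pow 2).mul_const (1 - a ^ 2)).add
        (((h1.pow 2).const_mul (2 * (1 + 4 * a ^ 2) * (1 - a ^ 2))))).sub (h1.pow 4)
    convert hder using 1
    rw [hODE s hs]
    field_simp
    ring
  have hEconst : ∀ s ∈ Set.Icc (0:ℝ) S, E s = E 0 := by
    have hcont : ContinuousOn E (Set.Icc 0 S) :=
      fun s hs => (hEd s hs).continuousAt.continuousWithinAt
    exact constant_of_has_deriv_right_zero hcont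
      (fun t ht => ((hEd t (Set.Ico_subset_Icc_self ht)).hasDerivWithinAt))
  have hE0 : E 0 = 2 * (1 + 4 * a ^ 2) * (1 - a ^ 2) ^ 2 - (1 - a ^ 2) ^ 2 := by
    simp only [hE, hx'0]
    rw [show x 0 ^ 4 = (x 0 ^ 2) ^ 2 by ring, hx0sq]
    ring
  -- key bound : x² ≤ 1 - a² on [0,S]
  have hbound : ∀ s ∈ Set.Icc (0:ℝ) S, x s ^ 2 ≤ 1 - a ^ 2 := by
    intro s hs
    by_contra hgt
    push_neg at hgt
    -- first: at any point where x t ^ 2 ∈ (1-a², (1+4a²)(1-a²)], contradiction from energy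
    have hener : ∀ t ∈ Set.Icc (0:ℝ) S,
        x t ^ 2 ≤ 1 - a ^ 2 ∨ (1 + 4 * a ^ 2) * (1 - a ^ 2) < x t ^ 2 := by
      intro t ht
      by_contra hmid
      push_neg at hmid
      obtain ⟨h1, h2⟩ := hmid
      have hEt := hEconst t ht
      rw [hE0] at hEt
      simp only [hE] at hEt
      have hx'sq : 0 ≤ x' t ^ 2 := sq_nonneg _
      set u := x t ^ 2 with hu
      have hx4 : x t ^ 4 = u ^ 2 := by rw [hu]; ring
      rw [hx4] at hEt
      -- hEt : x'²c + 2(1+4a²)c u - u² = 2(1+4a²)c² - c²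
      have hfact : x' t ^ 2 * (1 - a ^ 2)
          + (u - (1 - a ^ 2)) * (2 * (1 + 4 * a ^ 2) * (1 - a ^ 2) - u - (1 - a ^ 2)) = 0 := by
        nlinarith [hEt]
      have hpos2 : 0 < 2 * (1 + 4 * a ^ 2) * (1 - a ^ 2) - u - (1 - a ^ 2) := by
        nlinarith [mul_pos (mul_pos ha0 ha0) hc0]
      nlinarith [mul_nonneg hx'sq hc0.le, mul_pos (sub_pos.mpr h1) hpos2]
    -- x s ² > 1-a², so by the dichotomy x s ² > (1+4a²)(1-a²)
    have hsbig : (1 + 4 * a ^ 2) * (1 - a ^ 2) < x s ^ 2 := by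
      rcases hener s hs with h | h
      · linarith
      · exact h
    -- IVT to find a point with value exactly the middle  (1+2a²)(1-a²)
    have hm : (1 - a ^ 2) < (1 + 2 * a ^ 2) * (1 - a ^ 2) := by nlinarith [mul_pos (mul_pos ha0 ha0) hc0]
    have hm2 : (1 + 2 * a ^ 2) * (1 - a ^ 2) < (1 + 4 * a ^ 2) * (1 - a ^ 2) := by nlinarith [mul_pos (mul_pos ha0 ha0) hc0]
    have hs0 : (0:ℝ) ≤ s := hs.1
    have hsub : Set.Icc (0:ℝ) s ⊆ Set.Icc 0 S := Set.Icc_subset_Icc le_rfl hs.2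
    have hconts : ContinuousOn (fun t => x t ^ 2) (Set.Icc 0 s) :=
      ((hxc.mono hsub).pow 2)
    have hivt := intermediate_value_Icc hs0 hconts
    have hmem : (1 + 2 * a ^ 2) * (1 - a ^ 2) ∈ Set.Icc (x 0 ^ 2) (x s ^ 2) := by
      rw [hx0sq]
      exact ⟨hm.le, by linarith⟩
    obtain ⟨t, ht, hxt⟩ := hivt hmem
    have hxt2 : x t ^ 2 = (1 + 2 * a ^ 2) * (1 - a ^ 2) := hxt
    rcases hener t (hsub ht) with h | h
    · rw [hxt2] at h; linarith
    · rw [hxt2] at h; linarith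
  -- main contradiction argument
  by_contra hcon
  push_neg at hcon
  -- x is positive on [0,S]
  have hxpos : ∀ s ∈ Set.Icc (0:ℝ) S, 0 < x s := by
    intro s hs
    rcases eq_or_lt_of_le hs.1 with h0 | h0
    · rwa [← h0]
    · rcases lt_trichotomy (x s) 0 with hneg | h0' | hpos
      · -- IVT gives a zero in (0, s]
        have hsub : Set.Icc (0:ℝ) s ⊆ Set.Icc 0 S := Set.Icc_subset_Icc le_rfl hs.2
        have hivt := intermediate_value_Icc' (le_of_lt h0) (hxc.mono hsub)
        have hmem : (0:ℝ) ∈ Set.Icc (x s) (x 0) := ⟨hneg.le, hx0pos.le⟩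
        obtain ⟨t, ht, hxt⟩ := hivt hmem
        have ht0 : 0 < t := by
          rcases eq_or_lt_of_le ht.1 with h | h
          · exfalso; rw [← h] at hxt; linarith
          · exact h
        exact absurd hxt (hcon t ⟨ht0, le_trans ht.2 hs.2⟩)
      · exact (hcon s ⟨h0, hs.2⟩ h0').elim
      · exact hpos
  -- Sturm comparison with w(s) = cos(k s), k = 2√2 a
  set k : ℝ := 2 * Real.sqrt 2 * a with hk
  have hk0 : 0 < k := by positivity
  have hkS : k * S = Real.pi / 2 := by
    rw [hS, hk]
    have h2 : Real.sqrt 2 ≠ 0 := ne_of_gt hsqrt2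
    field_simp
    ring
  have hksq : k ^ 2 = 8 * a ^ 2 := by
    rw [hk]
    have : Real.sqrt 2 ^ 2 = 2 := Real.sq_sqrt (by norm_num)
    nlinarith [this]
  set W : ℝ → ℝ := fun s => x' s * Real.cos (k * s) + x s * (k * Real.sin (k * s)) with hW
  have hW0 : W 0 = 0 := by simp [hW, hx'0]
  have hWd : ∀ s ∈ Set.Icc (0:ℝ) S,
      HasDerivAt W ((x'' s + k ^ 2 * x s) * Real.cos (k * s)) s := by
    intro s hs
    have hcos : HasDerivAt (fun t => Real.cos (k * t)) (-Real.sin (k * s) * k) s := by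
      simpa [Function.comp_def] using (Real.hasDerivAt_cos (k * s)).comp s ((hasDerivAt_id s).const_mul k)
    have hsin : HasDerivAt (fun t => Real.sin (k * t)) (Real.cos (k * s) * k) s := by
      simpa [Function.comp_def] using (Real.hasDerivAt_sin (k * s)).comp s ((hasDerivAt_id s).const_mul k)
    have h1 := ((hx' s hs).mul hcos).add
      ((hx s hs).mul ((hsin.const_mul k)))
    exact h1.congr_deriv (by ring)
  have hWc : ContinuousOn W (Set.Icc 0 S) :=
    fun s hs => (hWd s hs).continuousAt.continuousWithinAt
  have hWanti : AntitoneOn W (Set.Icc 0 S) := by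
    apply antitoneOn_of_deriv_nonpos (convex_Icc 0 S) hWc
    · intro s hs
      rw [interior_Icc] at hs
      exact ((hWd s ⟨hs.1.le, hs.2.le⟩).differentiableAt).differentiableWithinAt
    · intro s hs
      rw [interior_Icc] at hs
      have hsI : s ∈ Set.Icc (0:ℝ) S := ⟨hs.1.le, hs.2.le⟩
      rw [(hWd s hsI).deriv]
      have hcosnn : 0 ≤ Real.cos (k * s) := by
        apply Real.cos_nonneg_of_mem_Icc
        constructor
        · have : 0 ≤ k * s := mul_nonneg hk0.le hs.1.le
          linarith [Real.pi_pos]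
        · calc k * s ≤ k * S := mul_le_mul_of_nonneg_left hs.2.le hk0.le
            _ = Real.pi / 2 := hkS
      have hfac : x'' s + k ^ 2 * x s ≤ 0 := by
        rw [hODE s hsI, hksq]
        have hxp := hxpos s hsI
        have hxb := hbound s hsI
        have : -2 * (1 + 4 * a ^ 2 - x s ^ 2 / (1 - a ^ 2)) * x s + 8 * a ^ 2 * x s
            = 2 * x s * (x s ^ 2 - (1 - a ^ 2)) / (1 - a ^ 2) := by
          field_simp
          ring
        rw [this]
        apply div_nonpos_of_nonpos_of_nonneg _ hc0.le
        nlinarith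
      exact mul_nonpos_of_nonpos_of_nonneg hfac hcosnn
  have hWS : W S ≤ 0 := by
    have := hWanti (Set.left_mem_Icc.mpr hS0.le) (Set.right_mem_Icc.mpr hS0.le) hS0.le
    rwa [hW0] at this
  have hWSval : W S = k * x S := by
    simp only [hW, hkS, Real.cos_pi_div_two, Real.sin_pi_div_two]
    ring
  have hxS := hxpos S (Set.right_mem_Icc.mpr hS0.le)
  rw [hWSval] at hWS
  nlinarith
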